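/- No C₃*-critical signed graph contains a vertex of degree 1, nor a vertex of degree 2 adjacent to another vertex of degree 2. -/

import Mathlib

/-- A signed graph: a vertex type with a symmetric positive-edge relation and a
symmetric negative-edge relation (loops and "digons" are allowed). -/
structure SignedGraph (V : Type*) where
  pos : V → V → Prop
  neg : V → V → Prop
  pos_symm : Symmetric pos
  neg_symm : Symmetric neg

namespace SignedGraph

variable {V W : Type*}

/-- Switching at the vertex set `{v | s v = true}`: signs of edges with exactly one
endpoint in the set are flipped; loops and edges with both or no endpoints in the
set are unchanged. -/
def switch (G : SignedGraph V) (s : V → Bool) : SignedGraph V where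
  pos u v := if s u = s v then G.pos u v else G.neg u v
  neg u v := if s u = s v then G.neg u v else G.pos u v
  pos_symm := by
    intro u v h
    by_cases hs : s u = s v
    · rw [if_pos hs] at h; rw [if_pos hs.symm]; exact G.pos_symm h
    · rw [if_neg hs] at h; rw [if_neg (fun e => hs e.symm)]; exact G.neg_symm h
  neg_symm := by
    intro u v h
    by_cases hs : s u = s v
    · rw [if_pos hs] at h; rw [if_pos hs.symm]; exact G.neg_symm h
    · rw [if_neg hs] at h; rw [if_neg (fun e => hs e.symm)]; exact G.pos_symm h

/-- An edge-sign preserving homomorphism maps positive edges to positive edges and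
negative edges to negative edges. -/
def IsESPHom (G : SignedGraph V) (H : SignedGraph W) (φ : V → W) : Prop :=
  (∀ u v, G.pos u v → H.pos (φ u) (φ v)) ∧ (∀ u v, G.neg u v → H.neg (φ u) (φ v))

/-- A signed graph admits a homomorphism to another iff some switching of it admits
an edge-sign preserving homomorphism (this preserves adjacency and signs of closed
walks). -/
def HasHomTo (G : SignedGraph V) (H : SignedGraph W) : Prop :=
  ∃ (s : V → Bool) (φ : V → W), IsESPHom (G.switch s) H φ

/-- `H` is a subgraph of `G` (on the same vertex set). -/
def IsSubgraph (H G : SignedGraph V) : Prop :=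
  (∀ u v, H.pos u v → G.pos u v) ∧ (∀ u v, H.neg u v → G.neg u v)

/-- The number of edges of a finite signed graph (unordered pairs, each sign
counted separately). -/
noncomputable def edgeCount (G : SignedGraph V) : ℕ :=
  (Sym2.fromRel (⟨fun _ _ h => G.pos_symm h⟩ : Std.Symm G.pos)).ncard +
    (Sym2.fromRel (⟨fun _ _ h => G.neg_symm h⟩ : Std.Symm G.neg)).ncard

/-- The degree of a vertex: the number of its neighbours (via an edge of either sign). -/
noncomputable def degree (G : SignedGraph V) (v : V) : ℕ :=
  {u | G.pos v u ∨ G.neg v u}.ncard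

/-- The underlying simple graph of a signed graph (loops discarded). -/
def underlying (G : SignedGraph V) : SimpleGraph V :=
  SimpleGraph.fromRel (fun u v => G.pos u v ∨ G.neg u v)

end SignedGraph

/-- `C₃*`: the all-positive triangle with a negative loop at each vertex. -/
def C3star : SignedGraph (Fin 3) where
  pos u v := u ≠ v
  neg u v := u = v
  pos_symm := fun _ _ h => h.symm
  neg_symm := fun _ _ h => h.symm

/-- A signed graph is `C₃*`-critical: it has no digon and no positive loop (the
girth conditions of Definition 2.7), admits no homomorphism to `C₃*`, but every
proper subgraph does. -/
def IsC3Critical {V : Type*} (G : SignedGraph V) : Prop :=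
  (∀ u v, ¬ (G.pos u v ∧ G.neg u v)) ∧
  (∀ v, ¬ G.pos v v) ∧
  ¬ G.HasHomTo C3star ∧
  ∀ H : SignedGraph V, H.IsSubgraph G → H ≠ G → H.HasHomTo C3star


section Aux

variable {V : Type*}

namespace SignedGraph

/-- Edge with sign as a `Bool`. -/
abbrev EG (G : SignedGraph V) (a b : V) (e : Bool) : Prop :=
  cond e (G.pos a b) (G.neg a b)

end SignedGraph

/-- Target constraint in `C3star`, with sign as a `Bool`. -/
abbrev OkC3 (x y : Fin 3) (e : Bool) : Prop := cond e (x ≠ y) (x = y)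

lemma OkC3_symm {x y : Fin 3} {e : Bool} (h : OkC3 x y e) : OkC3 y x e := by
  cases e
  · exact Eq.symm h
  · exact Ne.symm h

lemma EG_symm {G : SignedGraph V} {a b : V} {e : Bool} (h : G.EG a b e) : G.EG b a e := by
  cases e
  · exact G.neg_symm h
  · exact G.pos_symm h

lemma bool_aux : ∀ e p q : Bool, (e != ((Bool.xor p (!(e != (p != q)))) != q)) = true := by
  decide

lemma bne_comm' : ∀ a b : Bool, (a != b) = (b != a) := by decide

lemma bne_selfr : ∀ e p : Bool, (e != (p != p)) = e := by decide

lemma fin3_two : ∀ w x : Fin 3, ∃ y z : Fin 3, y ≠ z ∧ y ≠ w ∧ z ≠ x := by decide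

lemma fin3_one : ∀ w x : Fin 3, ∃ y : Fin 3, y ≠ w ∧ y ≠ x := by decide

lemma exists3 (w x : Fin 3) (p : Bool) :
    ∃ y z : Fin 3, OkC3 y z p ∧ y ≠ w ∧ z ≠ x := by
  cases p
  · obtain ⟨y, h1, h2⟩ := fin3_one w x
    exact ⟨y, y, rfl, h1, h2⟩
  · obtain ⟨y, z, h0, h1, h2⟩ := fin3_two w x
    exact ⟨y, z, h0, h1, h2⟩

lemma hom_iff (G : SignedGraph V) (s : V → Bool) (φ : V → Fin 3) :
    SignedGraph.IsESPHom (G.switch s) C3star φ ↔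
    ∀ a b (e : Bool), G.EG a b e → OkC3 (φ a) (φ b) (e != (s a != s b)) := by
  constructor
  · rintro ⟨hp, hn⟩ a b e he
    by_cases hs : s a = s b
    · have hb : (s a != s b) = false := by simp [hs]
      rw [hb]
      cases e
      · exact hn a b (show (if s a = s b then G.neg a b else G.pos a b) by
          rw [if_pos hs]; exact he)
      · exact hp a b (show (if s a = s b then G.pos a b else G.neg a b) by
          rw [if_pos hs]; exact he)
    · have hb : (s a != s b) = true := by simp [bne_iff_ne, hs]
      rw [hb]
      cases e
      · exact hp a b (show (if s a = s b then G.pos a b else G.neg a b) by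
          rw [if_neg hs]; exact he)
      · exact hn a b (show (if s a = s b then G.neg a b else G.pos a b) by
          rw [if_neg hs]; exact he)
  · intro h
    constructor
    · intro a b hab
      by_cases hs : s a = s b
      · have hb : (s a != s b) = false := by simp [hs]
        have hG : G.pos a b := by
          have : (if s a = s b then G.pos a b else G.neg a b) := hab
          rwa [if_pos hs] at this
        have := h a b true hG
        rwa [hb] at this
      · have hb : (s a != s b) = true := by simp [bne_iff_ne, hs]
        have hG : G.neg a b := by
          have : (if s a = s b then G.pos a b else G.neg a b) := hab
          rwa [if_neg hs] at this
        have := h a b false hG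
        rwa [hb] at this
    · intro a b hab
      by_cases hs : s a = s b
      · have hb : (s a != s b) = false := by simp [hs]
        have hG : G.neg a b := by
          have : (if s a = s b then G.neg a b else G.pos a b) := hab
          rwa [if_pos hs] at this
        have := h a b false hG
        rwa [hb] at this
      · have hb : (s a != s b) = true := by simp [bne_iff_ne, hs]
        have hG : G.pos a b := by
          have : (if s a = s b then G.neg a b else G.pos a b) := hab
          rwa [if_neg hs] at this
        have := h a b true hG
        rwa [hb] at this

/-- Deleting the (unordered) edge between `u` and `v`. -/
def delE (G : SignedGraph V) (u v : V) : SignedGraph V where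
  pos a b := G.pos a b ∧ ¬((a = u ∧ b = v) ∨ (a = v ∧ b = u))
  neg a b := G.neg a b ∧ ¬((a = u ∧ b = v) ∨ (a = v ∧ b = u))
  pos_symm := fun a b h => ⟨G.pos_symm h.1, fun hc => h.2 (by tauto)⟩
  neg_symm := fun a b h => ⟨G.neg_symm h.1, fun hc => h.2 (by tauto)⟩

lemma delE_sub (G : SignedGraph V) (u v : V) : (delE G u v).IsSubgraph G :=
  ⟨fun _ _ h => h.1, fun _ _ h => h.1⟩

lemma delE_ne (G : SignedGraph V) {u v : V} (h : G.pos u v ∨ G.neg u v) :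
    delE G u v ≠ G := by
  intro hEq
  rcases h with hp | hn
  · have hHp : (delE G u v).pos u v := by rw [hEq]; exact hp
    exact hHp.2 (Or.inl ⟨rfl, rfl⟩)
  · have hHn : (delE G u v).neg u v := by rw [hEq]; exact hn
    exact hHn.2 (Or.inl ⟨rfl, rfl⟩)

lemma sign_unique {G : SignedGraph V} (hdig : ∀ a b, ¬(G.pos a b ∧ G.neg a b))
    (a b : V) : ∃ e : Bool, ∀ e', G.EG a b e' → e' = e := by
  classical
  by_cases h : G.pos a b
  · refine ⟨true, fun e' he' => ?_⟩
    cases e'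
    · exact absurd ⟨h, he'⟩ (hdig a b)
    · rfl
  · refine ⟨false, fun e' he' => ?_⟩
    cases e'
    · rfl
    · exact absurd he' h

lemma other_nbr {s : Set V} {v : V} (h2 : s.ncard = 2) (hv : v ∈ s) :
    ∃ a, a ≠ v ∧ s = {v, a} := by
  obtain ⟨x, y, hxy, rfl⟩ := Set.ncard_eq_two.mp h2
  simp only [Set.mem_insert_iff, Set.mem_singleton_iff] at hv
  rcases hv with h | h
  · subst h
    exact ⟨y, Ne.symm hxy, rfl⟩
  · subst h
    exact ⟨x, hxy, Set.pair_comm x v⟩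

end Aux
theorem c3critical_no_deg_one_no_adjacent_deg_two {V : Type*} [Fintype V]
    (G : SignedGraph V) (hcrit : IsC3Critical G) :
    (∀ v, G.degree v ≠ 1) ∧
    (∀ u v, u ≠ v → (G.pos u v ∨ G.neg u v) →
      ¬ (G.degree u = 2 ∧ G.degree v = 2)) := by
  classical
  obtain ⟨hdig, hploop, hnohom, hsubhom⟩ := hcrit
  have hloop : ∀ (w : V) (e : Bool), G.EG w w e → e = false := by
    intro w e h
    cases e
    · rfl
    · exact absurd h (hploop w)
  constructor
  · -- no vertex of degree 1
    intro v hdeg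
    rw [SignedGraph.degree, Set.ncard_eq_one] at hdeg
    obtain ⟨w, hset⟩ := hdeg
    have hwmem : w ∈ {x | G.pos v x ∨ G.neg v x} := by rw [hset]; exact rfl
    have hadj : G.pos v w ∨ G.neg v w := hwmem
    obtain ⟨s, φ, hhom⟩ := hsubhom (delE G v w) (delE_sub G v w) (delE_ne G hadj)
    rw [hom_iff] at hhom
    obtain ⟨eVW, heVW⟩ := sign_unique hdig v w
    obtain ⟨c, hc⟩ : ∃ c : Fin 3, OkC3 c (φ w) (eVW != (s v != s w)) := by
      cases hE : (eVW != (s v != s w))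
      · exact ⟨φ w, rfl⟩
      · obtain ⟨y, h1, _⟩ := fin3_one (φ w) (φ w)
        exact ⟨y, h1⟩
    set φ' : V → Fin 3 := fun x => if x = v then c else φ x with hφ'def
    have hφ'v : φ' v = c := by simp [hφ'def]
    have hφ'o : ∀ x, x ≠ v → φ' x = φ x := by intro x hx; simp [hφ'def, hx]
    have memv : ∀ b (e : Bool), G.EG v b e → b = w := by
      intro b e h
      have hb : b ∈ {x | G.pos v x ∨ G.neg v x} := by
        cases e
        · exact Or.inr h
        · exact Or.inl h
      rw [hset] at hb
      exact hb
    have main : ∀ b (e : Bool), G.EG v b e → OkC3 (φ' v) (φ' b) (e != (s v != s b)) := by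
      intro b e h
      have hbw : b = w := memv b e h
      rw [hbw] at h ⊢
      by_cases hwv : w = v
      · rw [hwv] at h ⊢
        have he := hloop v e h
        subst he
        rw [bne_selfr false (s v)]
        exact rfl
      · have he := heVW e h
        subst he
        rw [hφ'v, hφ'o w hwv]
        exact hc
    refine hnohom ⟨s, φ', (hom_iff G s φ').mpr ?_⟩
    intro a b e h
    by_cases hav : a = v
    · rw [hav] at h ⊢
      exact main b e h
    by_cases hbv : b = v
    · rw [hbv] at h ⊢
      rw [bne_comm' (s a) (s v)]
      exact OkC3_symm (main a e (EG_symm h))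
    · rw [hφ'o a hav, hφ'o b hbv]
      refine hhom a b e ?_
      cases e
      · exact ⟨h, fun hcon => by
          rcases hcon with ⟨h1, _⟩ | ⟨_, h2⟩
          · exact hav h1
          · exact hbv h2⟩
      · exact ⟨h, fun hcon => by
          rcases hcon with ⟨h1, _⟩ | ⟨_, h2⟩
          · exact hav h1
          · exact hbv h2⟩
  · -- no adjacent degree-2 vertices
    intro u v huv hadj hdd
    obtain ⟨hd2u, hd2v⟩ := hdd
    rw [SignedGraph.degree] at hd2u hd2v
    have hvmem : v ∈ {x | G.pos u x ∨ G.neg u x} := hadj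
    obtain ⟨a₀, hav, hnbru⟩ := other_nbr hd2u hvmem
    have humem : u ∈ {x | G.pos v x ∨ G.neg v x} := by
      rcases hadj with h | h
      · exact Or.inl (G.pos_symm h)
      · exact Or.inr (G.neg_symm h)
    obtain ⟨b₀, hbu, hnbrv⟩ := other_nbr hd2v humem
    obtain ⟨s, φ, hhom⟩ := hsubhom (delE G u v) (delE_sub G u v) (delE_ne G hadj)
    rw [hom_iff] at hhom
    obtain ⟨eA, heA⟩ := sign_unique hdig u a₀
    obtain ⟨eB, heB⟩ := sign_unique hdig v b₀
    obtain ⟨eUV, heUV⟩ := sign_unique hdig u v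
    set tu : Bool := !(eA != (s u != s a₀)) with htudef
    set tv : Bool := !(eB != (s v != s b₀)) with htvdef
    set s' : V → Bool := fun w =>
      if w = u then Bool.xor (s u) tu else if w = v then Bool.xor (s v) tv else s w
      with hs'def
    have hs'u : s' u = Bool.xor (s u) tu := by simp [hs'def]
    have hs'v : s' v = Bool.xor (s v) tv := by simp [hs'def, Ne.symm huv]
    have hs'o : ∀ w, w ≠ u → w ≠ v → s' w = s w := by
      intro w h1 h2; simp [hs'def, h1, h2]
    obtain ⟨cu, cv, hcc, hcu, hcv⟩ := exists3 (φ a₀) (φ b₀) (eUV != (s' u != s' v))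
    set φ' : V → Fin 3 := fun w => if w = u then cu else if w = v then cv else φ w
      with hφ'def
    have hφ'u : φ' u = cu := by simp [hφ'def]
    have hφ'v : φ' v = cv := by simp [hφ'def, Ne.symm huv]
    have hφ'o : ∀ w, w ≠ u → w ≠ v → φ' w = φ w := by
      intro w h1 h2; simp [hφ'def, h1, h2]
    have memu : ∀ b (e : Bool), G.EG u b e → b = v ∨ b = a₀ := by
      intro b e h
      have hb : b ∈ {x | G.pos u x ∨ G.neg u x} := by
        cases e
        · exact Or.inr h
        · exact Or.inl h
      rw [hnbru] at hb
      simpa using hb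
    have memv : ∀ b (e : Bool), G.EG v b e → b = u ∨ b = b₀ := by
      intro b e h
      have hb : b ∈ {x | G.pos v x ∨ G.neg v x} := by
        cases e
        · exact Or.inr h
        · exact Or.inl h
      rw [hnbrv] at hb
      simpa using hb
    have main : ∀ b (e : Bool), G.EG u b e → OkC3 (φ' u) (φ' b) (e != (s' u != s' b)) := by
      intro b e h
      rcases memu b e h with hb | hb
      · rw [hb] at h ⊢
        have he := heUV e h
        subst he
        rw [hφ'u, hφ'v]
        exact hcc
      · rw [hb] at h ⊢
        by_cases hau : a₀ = u
        · rw [hau] at h ⊢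
          have he := hloop u e h
          subst he
          rw [bne_selfr false (s' u)]
          exact rfl
        · have he := heA e h
          rw [he]
          rw [hφ'u, hφ'o a₀ hau hav, hs'u, hs'o a₀ hau hav, htudef,
            bool_aux eA (s u) (s a₀)]
          exact hcu
    have mainv : ∀ b (e : Bool), G.EG v b e → OkC3 (φ' v) (φ' b) (e != (s' v != s' b)) := by
      intro b e h
      rcases memv b e h with hb | hb
      · rw [hb] at h ⊢
        have he := heUV e (EG_symm h)
        subst he
        rw [hφ'v, hφ'u, bne_comm' (s' v) (s' u)]
        exact OkC3_symm hcc
      · rw [hb] at h ⊢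
        by_cases hbv : b₀ = v
        · rw [hbv] at h ⊢
          have he := hloop v e h
          subst he
          rw [bne_selfr false (s' v)]
          exact rfl
        · have he := heB e h
          rw [he]
          rw [hφ'v, hφ'o b₀ hbu hbv, hs'v, hs'o b₀ hbu hbv, htvdef,
            bool_aux eB (s v) (s b₀)]
          exact hcv
    refine hnohom ⟨s', φ', (hom_iff G s' φ').mpr ?_⟩
    intro a b e h
    by_cases hau2 : a = u
    · rw [hau2] at h ⊢
      exact main b e h
    by_cases hav2 : a = v
    · rw [hav2] at h ⊢
      exact mainv b e h
    by_cases hbu2 : b = u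
    · rw [hbu2] at h ⊢
      rw [bne_comm' (s' a) (s' u)]
      exact OkC3_symm (main a e (EG_symm h))
    by_cases hbv2 : b = v
    · rw [hbv2] at h ⊢
      rw [bne_comm' (s' a) (s' v)]
      exact OkC3_symm (mainv a e (EG_symm h))
    · rw [hφ'o a hau2 hav2, hφ'o b hbu2 hbv2, hs'o a hau2 hav2, hs'o b hbu2 hbv2]
      refine hhom a b e ?_
      cases e
      · exact ⟨h, fun hcon => by
          rcases hcon with ⟨h1, _⟩ | ⟨h1, _⟩
          · exact hau2 h1
          · exact hav2 h1⟩
      · exact ⟨h, fun hcon => by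
          rcases hcon with ⟨h1, _⟩ | ⟨h1, _⟩
          · exact hau2 h1
          · exact hav2 h1⟩
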